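/- Let T be an unbounded m-accretive operator on a Hilbert space H such that H₁ := dom T ∩ dom T* is a closed subspace of H. Then the restriction T↾H₁ is a bounded operator from H₁ to H, and the complement H₂ = H ⊖ H₁ is infinite dimensional. -/

import Mathlib

open scoped ComplexInnerProductSpace

/-- Let `T` be an unbounded m-accretive operator on a Hilbert space `H` such
that `H₁ := dom T ∩ dom T*` is (topologically) closed in `H`.  Then the restriction of `T` to
`H₁` is bounded, and the orthogonal complement `H₂ = H ⊖ H₁` is infinite dimensional. -/
theorem restriction_bounded_and_complement_infinite
    {E : Type*} [NormedAddCommGroup E] [InnerProductSpace ℂ E] [CompleteSpace E]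
    (T : E →ₗ.[ℂ] E)
    (hdense : Dense (T.domain : Set E))
    (hclosed : T.IsClosed)
    (haccr : ∀ u : T.domain, 0 ≤ (⟪T u, (u : E)⟫).re)
    (haccr' : ∀ v : T.adjoint.domain, 0 ≤ (⟪T.adjoint v, (v : E)⟫).re)
    (hunb : ¬ ∃ C : ℝ, ∀ u : T.domain, ‖T u‖ ≤ C * ‖(u : E)‖)
    (hcl : IsClosed ((T.domain ⊓ T.adjoint.domain : Submodule ℂ E) : Set E)) :
    (∃ C : ℝ, ∀ u : T.domain, (u : E) ∈ T.adjoint.domain → ‖T u‖ ≤ C * ‖(u : E)‖) ∧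
    ¬ FiniteDimensional ℂ ((T.domain ⊓ T.adjoint.domain : Submodule ℂ E)ᗮ : Submodule ℂ E) := by
  set K : Submodule ℂ E := T.domain ⊓ T.adjoint.domain with hK
  haveI : CompleteSpace K := hcl.completeSpace_coe
  have hKdom : K ≤ T.domain := inf_le_left
  -- restriction of T to K as an honest linear map
  let S : K →ₗ[ℂ] E :=
    { toFun := fun x => T ⟨(x : E), hKdom x.2⟩
      map_add' := by
        intro x y
        have := T.map_add ⟨(x : E), hKdom x.2⟩ ⟨(y : E), hKdom y.2⟩
        simpa using this
      map_smul' := by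
        intro c x
        have := T.map_smul c ⟨(x : E), hKdom x.2⟩
        simpa using this }
  have hSgraph : IsClosed (S.graph : Set (K × E)) := by
    have hpre : (S.graph : Set (K × E)) =
        (fun p : K × E => ((p.1 : E), p.2)) ⁻¹' (T.graph : Set (E × E)) := by
      ext ⟨x, y⟩
      simp only [Set.mem_preimage, SetLike.mem_coe, LinearMap.mem_graph_iff,
        LinearPMap.mem_graph_iff]
      constructor
      · rintro rfl
        exact ⟨⟨(x : E), hKdom x.2⟩, rfl, rfl⟩
      · rintro ⟨u, hu1, hu2⟩
        have : u = ⟨(x : E), hKdom x.2⟩ := Subtype.ext hu1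
        rw [this] at hu2
        exact hu2.symm
    rw [hpre]
    exact hclosed.preimage (by fun_prop)
  have hScont : Continuous S := S.continuous_of_isClosed_graph hSgraph
  obtain ⟨C₁, hC₁pos, hC₁⟩ := SemilinearMapClass.bound_of_continuous S hScont
  constructor
  · refine ⟨C₁, fun u hu => ?_⟩
    have hmem : (u : E) ∈ K := ⟨u.2, hu⟩
    have heq : T u = S ⟨(u : E), hmem⟩ := rfl
    rw [heq]
    simpa using hC₁ ⟨(u : E), hmem⟩
  · intro hfin
    apply hunb
    -- T restricted to dom T ∩ Kᗮ is a map on a finite-dimensional space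
    set D : Submodule ℂ E := T.domain ⊓ Kᗮ with hD
    haveI : FiniteDimensional ℂ D :=
      Submodule.finiteDimensional_of_le (inf_le_right : D ≤ Kᗮ)
    have hDdom : D ≤ T.domain := inf_le_left
    let S₂ : D →ₗ[ℂ] E :=
      { toFun := fun x => T ⟨(x : E), hDdom x.2⟩
        map_add' := by
          intro x y
          have := T.map_add ⟨(x : E), hDdom x.2⟩ ⟨(y : E), hDdom y.2⟩
          simpa using this
        map_smul' := by
          intro c x
          have := T.map_smul c ⟨(x : E), hDdom x.2⟩
          simpa using this }
    obtain ⟨C₂, hC₂pos, hC₂⟩ :=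
      SemilinearMapClass.bound_of_continuous S₂ S₂.continuous_of_finiteDimensional
    refine ⟨C₁ + C₂, fun u => ?_⟩
    set v : E := ((K.orthogonalProjectionOnto (u : E)) : E) with hv
    have hvK : v ∈ K := (K.orthogonalProjectionOnto (u : E)).2
    set w : E := (u : E) - v with hw
    have hwKo : w ∈ Kᗮ := Submodule.sub_starProjection_mem_orthogonal (K := K) (u : E)
    have hwD : w ∈ D := ⟨sub_mem u.2 (hKdom hvK), hwKo⟩
    have hsplit : u = (⟨v, hKdom hvK⟩ : T.domain) + ⟨w, hDdom hwD⟩ := by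
      apply Subtype.ext
      simp [hw]
    have hTu : T u = S ⟨v, hvK⟩ + S₂ ⟨w, hwD⟩ := by
      rw [hsplit, T.map_add]; rfl
    have hinner : ⟪v, w⟫ = 0 := hwKo v hvK
    have hnorm : ‖(u : E)‖ ^ 2 = ‖v‖ ^ 2 + ‖w‖ ^ 2 := by
      have : (u : E) = v + w := by simp [hw]
      rw [this, @norm_add_sq ℂ]
      rw [hinner]
      simp
    have hvle : ‖v‖ ≤ ‖(u : E)‖ := by
      nlinarith [norm_nonneg v, norm_nonneg w, norm_nonneg ((u : E)), sq_nonneg ‖w‖]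
    have hwle : ‖w‖ ≤ ‖(u : E)‖ := by
      nlinarith [norm_nonneg v, norm_nonneg w, norm_nonneg ((u : E))]
    calc ‖T u‖ ≤ ‖S ⟨v, hvK⟩‖ + ‖S₂ ⟨w, hwD⟩‖ := by rw [hTu]; exact norm_add_le _ _
      _ ≤ C₁ * ‖v‖ + C₂ * ‖w‖ := add_le_add (by simpa using hC₁ ⟨v, hvK⟩) (by simpa using hC₂ ⟨w, hwD⟩)
      _ ≤ C₁ * ‖(u : E)‖ + C₂ * ‖(u : E)‖ := by
          gcongr
      _ = (C₁ + C₂) * ‖(u : E)‖ := by ring
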